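/- Let Γ be a lattice in ℂ², i.e., an additive subgroup of ℂ² that is discrete (it has no accumulation point in ℂ²) and spans ℂ² as a real vector space, and suppose i·Γ = Γ (Γ is stable under scalar multiplication by i). Then Γ, regarded as a module over the ring ℤ[i] of Gaussian integers acting by complex scalar multiplication, is a free ℤ[i]-module of rank 2. -/

import Mathlib

open Pointwise

set_option maxHeartbeats 1000000 in
set_option synthInstance.maxHeartbeats 200000 in
noncomputable instance : Module GaussianInt (EuclideanSpace ℂ (Fin 2)) :=
  Module.compHom _ GaussianInt.toComplex

lemma gsmul_def (q : GaussianInt) (v : EuclideanSpace ℂ (Fin 2)) :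
    q • v = (q : ℂ) • v := rfl

noncomputable def gaussBasis : Module.Basis (Fin 2) ℤ GaussianInt :=
  Module.Basis.ofEquivFun
    { toFun := fun q => ![q.re, q.im]
      invFun := fun f => ⟨f 0, f 1⟩
      map_add' := by intro a b; funext i; fin_cases i <;> simp
      map_smul' := by intro c a; funext i; fin_cases i <;> simp
      left_inv := fun q => rfl
      right_inv := by intro f; funext i; fin_cases i <;> rfl }

instance : Module.Free ℤ GaussianInt := Module.Free.of_basis gaussBasis

lemma finrank_gauss : Module.finrank ℤ GaussianInt = 2 := by
  rw [Module.finrank_eq_card_basis gaussBasis, Fintype.card_fin]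

set_option maxHeartbeats 2000000 in
set_option synthInstance.maxHeartbeats 400000 in
theorem lattice_stable_under_I_free_rank_two
    (Γ : AddSubgroup (EuclideanSpace ℂ (Fin 2)))
    (hdisc : ∀ z : EuclideanSpace ℂ (Fin 2),
      ¬ AccPt z (Filter.principal (Γ : Set (EuclideanSpace ℂ (Fin 2)))))
    (hspan : Submodule.span ℝ (Γ : Set (EuclideanSpace ℂ (Fin 2))) = ⊤)
    (hI : Complex.I • (Γ : Set (EuclideanSpace ℂ (Fin 2)))
      = (Γ : Set (EuclideanSpace ℂ (Fin 2)))) :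
    ∃ e₁ e₂ : EuclideanSpace ℂ (Fin 2), e₁ ∈ Γ ∧ e₂ ∈ Γ ∧
      (∀ a b c d : ℤ,
        ((a : ℂ) + (b : ℂ) * Complex.I) • e₁ + ((c : ℂ) + (d : ℂ) * Complex.I) • e₂ ∈ Γ) ∧
      ∀ v ∈ Γ, ∃! p : (ℤ × ℤ) × ℤ × ℤ,
        v = ((p.1.1 : ℂ) + (p.1.2 : ℂ) * Complex.I) • e₁ +
            ((p.2.1 : ℂ) + (p.2.2 : ℂ) * Complex.I) • e₂ := by
  classical
  have hIv : ∀ v ∈ Γ, Complex.I • v ∈ Γ := by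
    intro v hv
    have : Complex.I • v ∈ Complex.I • (Γ : Set (EuclideanSpace ℂ (Fin 2))) :=
      Set.smul_mem_smul_set hv
    rwa [hI] at this
  -- Γ as a ℤ[i]-submodule of ℂ²
  let L : Submodule GaussianInt (EuclideanSpace ℂ (Fin 2)) :=
    { carrier := (Γ : Set (EuclideanSpace ℂ (Fin 2)))
      add_mem' := fun ha hb => Γ.add_mem ha hb
      zero_mem' := Γ.zero_mem
      smul_mem' := by
        intro c x hx
        have h0 : c • x = (c.re : ℂ) • x + (c.im : ℂ) • (Complex.I • x) := by
          rw [gsmul_def, GaussianInt.toComplex_def, add_smul, mul_smul]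
        rw [h0, Int.cast_smul_eq_zsmul, Int.cast_smul_eq_zsmul]
        exact Γ.add_mem (Γ.zsmul_mem hx _) (Γ.zsmul_mem (hIv x hx) _) }
  let L' : Submodule ℤ (EuclideanSpace ℂ (Fin 2)) := L.restrictScalars ℤ
  haveI hLdisc : DiscreteTopology L' := by
    have : DiscreteTopology ((L' : Set (EuclideanSpace ℂ (Fin 2)))) := by
      rw [discreteTopology_subtype_iff]
      intro x _
      have h := hdisc x
      rw [AccPt, Filter.not_neBot] at h
      exact h
    exact this
  haveI : IsZLattice ℝ L' := ⟨hspan⟩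
  haveI hfin' : Module.Finite ℤ L' := ZLattice.module_finite ℝ L'
  have hrank4 : Module.finrank ℤ L' = 4 := by
    rw [ZLattice.rank ℝ L', ← Module.finrank_mul_finrank ℝ ℂ (EuclideanSpace ℂ (Fin 2)),
      Complex.finrank_real_complex, finrank_euclideanSpace_fin]
  -- transfer to L as ℤ-module
  let eq0 : L' ≃+ L :=
    { toFun := fun x => ⟨x.1, x.2⟩
      invFun := fun x => ⟨x.1, x.2⟩
      left_inv := fun _ => rfl
      right_inv := fun _ => rfl
      map_add' := fun _ _ => rfl }
  let eqL : L' ≃ₗ[ℤ] L := eq0.toIntLinearEquiv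
  haveI : Module.Finite ℤ L := Module.Finite.equiv eqL
  have hrankL : Module.finrank ℤ L = 4 := by rw [← eqL.finrank_eq]; exact hrank4
  haveI : Module.Finite GaussianInt L :=
    Module.Finite.of_restrictScalars_finite ℤ GaussianInt L
  haveI : NoZeroSMulDivisors GaussianInt L := by
    refine ⟨fun {c x} h => ?_⟩
    rcases eq_or_ne c 0 with hc | hc
    · exact Or.inl hc
    · right
      have h' : (c : ℂ) • (x : EuclideanSpace ℂ (Fin 2)) = 0 := by
        have h2 := congrArg Subtype.val h
        rw [Submodule.coe_smul] at h2
        rw [gsmul_def] at h2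
        exact h2
      have hc' : (c : ℂ) ≠ 0 := by
        rw [Ne, GaussianInt.toComplex_eq_zero]
        exact hc
      exact Subtype.ext ((smul_eq_zero.mp h').resolve_left hc')
  haveI : Module.Free GaussianInt L := Module.free_of_finite_type_torsion_free'
  have hmul : Module.finrank ℤ GaussianInt * Module.finrank GaussianInt L
      = Module.finrank ℤ L := Module.finrank_mul_finrank ℤ GaussianInt L
  have hrank2 : Module.finrank GaussianInt L = 2 := by
    rw [finrank_gauss, hrankL] at hmul; omega
  have hcard : Fintype.card (Module.Free.ChooseBasisIndex GaussianInt L) = 2 := by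
    rw [← Module.finrank_eq_card_chooseBasisIndex, hrank2]
  let bb : Module.Basis (Fin 2) GaussianInt L :=
    (Module.Free.chooseBasis GaussianInt L).reindex
      (Fintype.equivFinOfCardEq hcard)
  -- coercion lemma
  have hcoe : ∀ (q r : GaussianInt),
      ((q • bb 0 + r • bb 1 : L) : EuclideanSpace ℂ (Fin 2))
        = (q : ℂ) • (bb 0 : EuclideanSpace ℂ (Fin 2))
          + (r : ℂ) • (bb 1 : EuclideanSpace ℂ (Fin 2)) := by
    intro q r
    rw [Submodule.coe_add, Submodule.coe_smul, Submodule.coe_smul, gsmul_def, gsmul_def]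
  refine ⟨(bb 0 : EuclideanSpace ℂ (Fin 2)), (bb 1 : EuclideanSpace ℂ (Fin 2)),
    (bb 0).2, (bb 1).2, ?_, ?_⟩
  · -- combination closure
    intro a b c d
    have hz := ((⟨a, b⟩ : GaussianInt) • bb 0 + (⟨c, d⟩ : GaussianInt) • bb 1).2
    rw [hcoe] at hz
    rwa [GaussianInt.toComplex_def', GaussianInt.toComplex_def'] at hz
  · intro v hv
    set w : L := ⟨v, hv⟩ with hw
    have key : ∀ q r : GaussianInt,
        (v = (q : ℂ) • (bb 0 : EuclideanSpace ℂ (Fin 2))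
            + (r : ℂ) • (bb 1 : EuclideanSpace ℂ (Fin 2)))
          ↔ w = q • bb 0 + r • bb 1 := by
      intro q r
      rw [Subtype.ext_iff, hcoe]
    have keyrepr : ∀ q r : GaussianInt,
        (w = q • bb 0 + r • bb 1) ↔ (bb.repr w 0 = q ∧ bb.repr w 1 = r) := by
      intro q r
      constructor
      · intro h
        constructor
        · rw [h]; simp [Finsupp.single_apply]
        · rw [h]; simp [Finsupp.single_apply]
      · rintro ⟨h0, h1⟩
        have hs := bb.sum_repr w
        rw [Fin.sum_univ_two, h0, h1] at hs
        exact hs.symm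
    refine ⟨(((bb.repr w 0).re, (bb.repr w 0).im), ((bb.repr w 1).re, (bb.repr w 1).im)),
      ?_, ?_⟩
    · show v = _
      have hv2 : v = ((bb.repr w 0 : ℂ)) • (bb 0 : EuclideanSpace ℂ (Fin 2))
          + ((bb.repr w 1 : ℂ)) • (bb 1 : EuclideanSpace ℂ (Fin 2)) :=
        (key _ _).mpr ((keyrepr _ _).mpr ⟨rfl, rfl⟩)
      rw [hv2, GaussianInt.toComplex_def, GaussianInt.toComplex_def]
    · rintro ⟨⟨a, b⟩, ⟨c, d⟩⟩ hp
      have hp' : v = ((⟨a, b⟩ : GaussianInt) : ℂ) • (bb 0 : EuclideanSpace ℂ (Fin 2))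
          + ((⟨c, d⟩ : GaussianInt) : ℂ) • (bb 1 : EuclideanSpace ℂ (Fin 2)) := by
        rw [GaussianInt.toComplex_def', GaussianInt.toComplex_def']
        exact hp
      obtain ⟨h0, h1⟩ := (keyrepr _ _).mp ((key _ _).mp hp')
      have e0 : (⟨a, b⟩ : GaussianInt) = bb.repr w 0 := h0.symm
      have e1 : (⟨c, d⟩ : GaussianInt) = bb.repr w 1 := h1.symm
      simp only [Prod.mk.injEq]
      exact ⟨⟨congrArg Zsqrtd.re e0, congrArg Zsqrtd.im e0⟩,
        ⟨congrArg Zsqrtd.re e1, congrArg Zsqrtd.im e1⟩⟩
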